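/- Let $A, B, q : [0,T] \to \mathbb{R}^{n\times n}$ be $C^1$ with $q_t$ invertible for all $t$. Suppose $F : [0,T] \to \mathbb{R}^{n\times n}$ is $C^2$, satisfies $0 = (A_t - \dot B_t^T) F_t + (B_t - B_t^T - \dot q_t) \dot F_t - q_t \ddot F_t$ with $F_T = I$ and $B_T^T F_T + q_T \dot F_T = 0$, and $F_t$ is invertible for all $t \in [0,T]$. Define $\theta_t = -q_t \dot F_t F_t^{-1} - B_t^T$. Then $\theta_T = 0$ and $\theta$ satisfies the Riccati equation $A_t + \dot\theta_t = (B_t + \theta_t) q_t^{-1} (B_t^T + \theta_t)$. -/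

import Mathlib

open Matrix Set

attribute [local instance] Matrix.normedAddCommGroup Matrix.normedSpace

lemma diff_prod {ι : Type*} (u : Finset ι) (f : ι → ℝ → ℝ) {t : ℝ}
    (h : ∀ i ∈ u, DifferentiableAt ℝ (f i) t) :
    DifferentiableAt ℝ (fun s => ∏ i ∈ u, f i s) t := by
  classical
  induction u using Finset.induction_on with
  | empty => simp
  | insert a u' hx ih =>
    simp only [Finset.prod_insert hx]
    exact (h a (Finset.mem_insert_self a u')).mul
      (ih fun i hi => h i (Finset.mem_insert_of_mem hi))

lemma det_diff {n : ℕ} {M : ℝ → Matrix (Fin n) (Fin n) ℝ} {t : ℝ}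
    (h : ∀ i j, DifferentiableAt ℝ (fun s => M s i j) t) :
    DifferentiableAt ℝ (fun s => (M s).det) t := by
  simp only [Matrix.det_apply']
  exact DifferentiableAt.fun_sum fun (σ : Equiv.Perm (Fin n)) _ =>
    (differentiableAt_const _).mul (diff_prod _ _ fun i _ => h (σ i) i)

lemma matderiv_mul {n : ℕ} {f g : ℝ → Matrix (Fin n) (Fin n) ℝ}
    {f' g' : Matrix (Fin n) (Fin n) ℝ} {t : ℝ}
    (hf : HasDerivAt f f' t) (hg : HasDerivAt g g' t) :
    HasDerivAt (fun s => f s * g s) (f' * g t + f t * g') t := by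
  have h1 : ∀ i j, HasDerivAt (fun s => f s i j) (f' i j) t := by
    intro i j
    exact (hasDerivAt_pi.1 ((hasDerivAt_pi (φ' := f')).1 hf i)) j
  have h2 : ∀ i j, HasDerivAt (fun s => g s i j) (g' i j) t := by
    intro i j
    exact (hasDerivAt_pi.1 ((hasDerivAt_pi (φ' := g')).1 hg i)) j
  refine (hasDerivAt_pi (φ' := f' * g t + f t * g')).2 ?_
  intro i
  rw [hasDerivAt_pi]
  intro j
  simp only [Matrix.mul_apply, Matrix.add_apply]
  rw [← Finset.sum_add_distrib]
  exact HasDerivAt.fun_sum fun k _ => ((h1 i k).mul (h2 k j))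

lemma matderiv_transpose {n : ℕ} {f : ℝ → Matrix (Fin n) (Fin n) ℝ}
    {f' : Matrix (Fin n) (Fin n) ℝ} {t : ℝ} (hf : HasDerivAt f f' t) :
    HasDerivAt (fun s => (f s)ᵀ) f'ᵀ t := by
  refine (hasDerivAt_pi (φ' := f'ᵀ)).2 ?_
  intro i
  rw [hasDerivAt_pi]
  intro j
  simp only [Matrix.transpose_apply]
  exact (hasDerivAt_pi.1 ((hasDerivAt_pi (φ' := f')).1 hf j)) i

lemma matinv_hasDerivAt {n : ℕ} {F : ℝ → Matrix (Fin n) (Fin n) ℝ}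
    {F' : Matrix (Fin n) (Fin n) ℝ} {t : ℝ}
    (hF : HasDerivAt F F' t) (h : IsUnit (F t)) :
    HasDerivAt (fun s => (F s)⁻¹) (-((F t)⁻¹ * F' * (F t)⁻¹)) t := by
  have hent : ∀ i j, DifferentiableAt ℝ (fun s => F s i j) t := fun i j =>
    ((hasDerivAt_pi.1 ((hasDerivAt_pi (φ' := F')).1 hF i)) j).differentiableAt
  have hdet : DifferentiableAt ℝ (fun s => (F s).det) t := det_diff hent
  have hdetne : (F t).det ≠ 0 := by
    have := (Matrix.isUnit_iff_isUnit_det (F t)).1 h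
    exact IsUnit.ne_zero this
  have hGdiff : DifferentiableAt ℝ (fun s => (F s)⁻¹) t := by
    refine (differentiableAt_pi (𝕜 := ℝ) (Φ := fun s => ((F s)⁻¹ : Matrix (Fin n) (Fin n) ℝ))).2 ?_
    intro i
    rw [differentiableAt_pi]
    intro j
    have : (fun s => (F s)⁻¹ i j)
        = fun s => ((F s).det)⁻¹ * ((F s).updateRow j (Pi.single i 1)).det := by
      funext s
      rw [Matrix.inv_def, Matrix.smul_apply, Matrix.adjugate_apply, Ring.inverse_eq_inv',
        smul_eq_mul]
    rw [this]
    refine (hdet.inv hdetne).mul (det_diff fun k l => ?_)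
    simp only [Matrix.updateRow_apply]
    by_cases hk : k = j
    · simp [hk]
    · simp only [hk, if_false]
      exact hent k l
  set G := fun s => (F s)⁻¹ with hG
  have hGd : HasDerivAt G (deriv G t) t := hGdiff.hasDerivAt
  have hmul : HasDerivAt (fun s => F s * G s) (F' * G t + F t * deriv G t) t :=
    matderiv_mul hF hGd
  have hev : (fun s => F s * G s) =ᶠ[nhds t] fun _ => 1 := by
    have : ∀ᶠ s in nhds t, (F s).det ≠ 0 := hdet.continuousAt.eventually_ne hdetne
    filter_upwards [this] with s hs
    exact Matrix.mul_nonsing_inv _ (isUnit_iff_ne_zero.mpr hs)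
  have h0 : HasDerivAt (fun s => F s * G s) 0 t :=
    (hasDerivAt_const t (1 : Matrix (Fin n) (Fin n) ℝ)).congr_of_eventuallyEq hev
  have hsum : F' * G t + F t * deriv G t = 0 := hmul.unique h0
  have hGF : G t * F t = 1 := Matrix.nonsing_inv_mul _ ((Matrix.isUnit_iff_isUnit_det _).1 h)
  have : deriv G t = -(G t * F' * G t) := by
    have h1 : F t * deriv G t = -(F' * G t) := by
      rw [eq_neg_iff_add_eq_zero, add_comm]; exact hsum
    calc deriv G t = (G t * F t) * deriv G t := by rw [hGF, one_mul]
    _ = G t * (F t * deriv G t) := by rw [mul_assoc]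
    _ = -(G t * F' * G t) := by rw [h1, mul_neg, mul_assoc]
  rw [← this]
  exact hGd

/-- Proposition 1(ii): if `F` is a `C²` solution of the second-order linear ODE
`0 = (A - Ḃᵀ)F + (B - Bᵀ - q̇)Ḟ - q F̈` with `F T = I`, `Bᵀ F T + q Ḟ T = 0`,
and `F t` is invertible for all `t`, then `θ := -q Ḟ F⁻¹ - Bᵀ` satisfies
`θ T = 0` and the Riccati equation `A + θ̇ = (B+θ) q⁻¹ (Bᵀ+θ)`. -/
theorem linear_to_riccati {n : ℕ} (T : ℝ) (hT : 0 ≤ T)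
    (A B q A' B' q' F F' F'' : ℝ → Matrix (Fin n) (Fin n) ℝ)
    (hA : ∀ t ∈ Icc 0 T, HasDerivAt A (A' t) t)
    (hB : ∀ t ∈ Icc 0 T, HasDerivAt B (B' t) t)
    (hq : ∀ t ∈ Icc 0 T, HasDerivAt q (q' t) t)
    (hqinv : ∀ t ∈ Icc 0 T, IsUnit (q t))
    (hF : ∀ t ∈ Icc 0 T, HasDerivAt F (F' t) t)
    (hF' : ∀ t ∈ Icc 0 T, HasDerivAt F' (F'' t) t)
    (hFode : ∀ t ∈ Icc 0 T,
        0 = (A t - (B' t)ᵀ) * F t + (B t - (B t)ᵀ - q' t) * F' t - q t * F'' t)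
    (hFT : F T = 1)
    (hbc : (B T)ᵀ * F T + q T * F' T = 0)
    (hFinv : ∀ t ∈ Icc 0 T, IsUnit (F t))
    (θ : ℝ → Matrix (Fin n) (Fin n) ℝ)
    (hθdef : ∀ t, θ t = -(q t * F' t * (F t)⁻¹) - (B t)ᵀ) :
    θ T = 0 ∧
      ∀ t ∈ Icc 0 T,
        HasDerivAt θ (-(A t) + (B t + θ t) * (q t)⁻¹ * ((B t)ᵀ + θ t)) t := by
  constructor
  · have h1 : (B T)ᵀ + q T * F' T = 0 := by rwa [hFT, mul_one] at hbc
    rw [hθdef, hFT, inv_one, mul_one]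
    calc -(q T * F' T) - (B T)ᵀ = -((B T)ᵀ + q T * F' T) := by abel
    _ = 0 := by rw [h1, neg_zero]
  · intro t ht
    have hθfun : θ = fun s => -(q s * F' s * (F s)⁻¹) - (B s)ᵀ := funext hθdef
    set G := (F t)⁻¹ with hGdef
    have hGd : HasDerivAt (fun s => (F s)⁻¹) (-(G * F' t * G)) t :=
      matinv_hasDerivAt (hF t ht) (hFinv t ht)
    have hD : HasDerivAt (fun s => -(q s * F' s * (F s)⁻¹) - (B s)ᵀ)
        (-((q' t * F' t + q t * F'' t) * G + (q t * F' t) * (-(G * F' t * G)))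
          - (B' t)ᵀ) t :=
      ((matderiv_mul (matderiv_mul (hq t ht) (hF' t ht)) hGd).neg).sub
        (matderiv_transpose (hB t ht))
    have hDθ : HasDerivAt θ
        (-((q' t * F' t + q t * F'' t) * G + (q t * F' t) * (-(G * F' t * G)))
          - (B' t)ᵀ) t :=
      hD.congr_of_eventuallyEq (Filter.Eventually.of_forall fun s => hθdef s)
    have hFG : F t * G = 1 := Matrix.mul_nonsing_inv _
      ((Matrix.isUnit_iff_isUnit_det _).1 (hFinv t ht))
    have hqi : (q t)⁻¹ * q t = 1 := Matrix.nonsing_inv_mul _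
      ((Matrix.isUnit_iff_isUnit_det _).1 (hqinv t ht))
    have key : A t - (B' t)ᵀ + (B t - (B t)ᵀ - q' t) * F' t * G - q t * F'' t * G = 0 := by
      calc A t - (B' t)ᵀ + (B t - (B t)ᵀ - q' t) * F' t * G - q t * F'' t * G
          = (A t - (B' t)ᵀ) * (F t * G) + (B t - (B t)ᵀ - q' t) * F' t * G
            - q t * F'' t * G := by rw [hFG, mul_one]
        _ = ((A t - (B' t)ᵀ) * F t + (B t - (B t)ᵀ - q' t) * F' t - q t * F'' t) * G := by
            noncomm_ring
        _ = 0 * G := by rw [← hFode t ht]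
        _ = 0 := zero_mul G
    convert hDθ using 1
    rw [hθdef t, ← hGdef]
    have hb : B t + (-(q t * F' t * G) - (B t)ᵀ) = B t - (B t)ᵀ - q t * F' t * G := by abel
    have hbt : (B t)ᵀ + (-(q t * F' t * G) - (B t)ᵀ) = -(q t * F' t * G) := by abel
    rw [hb, hbt]
    have hmid : (B t - (B t)ᵀ - q t * F' t * G) * (q t)⁻¹ * (-(q t * F' t * G))
        = -((B t - (B t)ᵀ - q t * F' t * G) * (F' t * G)) := by
      calc (B t - (B t)ᵀ - q t * F' t * G) * (q t)⁻¹ * (-(q t * F' t * G))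
          = -((B t - (B t)ᵀ - q t * F' t * G) * ((q t)⁻¹ * q t * (F' t * G))) := by
            noncomm_ring
        _ = -((B t - (B t)ᵀ - q t * F' t * G) * (F' t * G)) := by rw [hqi, one_mul]
    rw [hmid, ← sub_eq_zero, ← neg_eq_zero, ← key]
    noncomm_ring
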